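/- If W is a trapezoidal word, then for every 0 ≤ n ≤ |W| there is at most one right special factor of W of length n. -/

import Mathlib

open List

variable {α : Type*} [DecidableEq α]

/-- The set of factors (contiguous subwords) of `W`. -/
def factorFinset (W : List α) : Finset (List α) := (W.inits.flatMap List.tails).toFinset

/-- A palindrome is a word equal to its reversal. -/
def Pal (u : List α) : Prop := u.reverse = u

instance : DecidablePred (Pal : List α → Prop) :=
  fun u => inferInstanceAs (Decidable (u.reverse = u))

/-- The set of palindromic factors of `W` (including the empty word). -/
def palFactorFinset (W : List α) : Finset (List α) := (factorFinset W).filter Pal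

/-- Subword complexity: the number of distinct factors of `W` of length `n`. -/
def C (W : List α) (n : ℕ) : ℕ := ((factorFinset W).filter (fun u => u.length = n)).card

/-- Palindromic complexity: number of distinct palindromic factors of `W` of length `n`. -/
def P (W : List α) (n : ℕ) : ℕ := ((palFactorFinset W).filter (fun u => u.length = n)).card

/-- A word is rich if it has exactly `|W| + 1` distinct palindromic factors. -/
def Rich (W : List α) : Prop := (palFactorFinset W).card = W.length + 1

/-- Number of occurrences of `u` as a factor of `W`. -/
def occ (u W : List α) : ℕ := ((List.range (W.length + 1)).filter (fun i => u <+: W.drop i)).length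

/-- `Z` is a complete return to `u` in `W`: a factor of `W` with exactly two
occurrences of `u`, one as a prefix and one as a suffix. -/
def CompleteReturn (u Z W : List α) : Prop := Z <:+: W ∧ u <+: Z ∧ u <:+ Z ∧ occ u Z = 2

/-- `u` is a right special factor of `W`. -/
def RightSpecial (u W : List α) : Prop :=
  ∃ x y : α, x ≠ y ∧ (u ++ [x]) <:+: W ∧ (u ++ [y]) <:+: W

/-- `R_W`: the smallest `p` such that `W` has no right special factor of length `p`. -/
noncomputable def RW (W : List α) : ℕ := sInf {p : ℕ | ∀ u : List α, u.length = p → ¬ RightSpecial u W}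

/-- `K_W`: the length of the shortest suffix of `W` occurring exactly once in `W`. -/
noncomputable def KW (W : List α) : ℕ := sInf {k : ℕ | ∃ u : List α, u <:+ W ∧ u.length = k ∧ occ u W = 1}

/-- A word is trapezoidal if `|W| = R_W + K_W`. -/
def Trapezoidal (W : List α) : Prop := W.length = RW W + KW W

/-- The minimal period of `W`. -/
noncomputable def minPeriod (W : List α) : ℕ :=
  sInf {q : ℕ | 0 < q ∧ ∀ i : ℕ, i + q < W.length → W[i]? = W[i + q]?}

/-- A binary word is balanced if the number of occurrences of a letter in two
factors of equal length differ by at most 1. -/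
def BalancedWord (W : List Bool) : Prop :=
  ∀ u v : List Bool, u <:+: W → v <:+: W → u.length = v.length →
    u.count true ≤ v.count true + 1

set_option linter.unusedSectionVars false

lemma mem_factorFinset {u W : List α} : u ∈ factorFinset W ↔ u <:+: W := by
  simp only [factorFinset, List.mem_toFinset, List.mem_flatMap, List.mem_inits, List.mem_tails]
  constructor
  · rintro ⟨s, hs, hu⟩
    exact hu.isInfix.trans hs.isInfix
  · rintro ⟨s, t, hst⟩
    exact ⟨s ++ u, ⟨t, by simpa [List.append_assoc] using hst⟩, suffix_append s u⟩

lemma infix_of_prefix_drop {u W : List α} {i : ℕ} (h : u <+: W.drop i) : u <:+: W :=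
  h.isInfix.trans (drop_suffix i W).isInfix

lemma occ_pos_of_infix {u W : List α} (h : u <:+: W) : 1 ≤ occ u W := by
  rcases h with ⟨s, t, hst⟩
  have hi : u <+: W.drop s.length := by
    rw [← hst, List.append_assoc, drop_left]; exact ⟨t, rfl⟩
  have hmem : s.length ∈ (List.range (W.length + 1)).filter (fun i => u <+: W.drop i) := by
    simp only [List.mem_filter, List.mem_range, decide_eq_true_eq]
    exact ⟨by rw [← hst]; simp <;> omega, hi⟩
  have := List.length_pos_of_mem hmem
  unfold occ; omega

lemma nodup_all_eq_len_le_one {l : List ℕ} (hn : l.Nodup) (h : ∀ a ∈ l, ∀ b ∈ l, a = b) :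
    l.length ≤ 1 := by
  match l with
  | [] => simp
  | [a] => simp
  | a :: b :: t =>
    exfalso
    have : a = b := h a (by simp) b (by simp)
    simp [this] at hn

lemma two_mem {l : List ℕ} (hn : l.Nodup) (h2 : 2 ≤ l.length) :
    ∃ a ∈ l, ∃ b ∈ l, a ≠ b := by
  match l with
  | [] => simp at h2
  | [a] => simp at h2
  | a :: b :: t =>
    have hab : a ≠ b := by simp at hn; tauto
    exact ⟨a, by simp, b, by simp, hab⟩

lemma exists_two_of_occ {u W : List α} (h : 2 ≤ occ u W) :
    ∃ i j : ℕ, i ≠ j ∧ i ≤ W.length ∧ j ≤ W.length ∧ u <+: W.drop i ∧ u <+: W.drop j := by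
  obtain ⟨a, ha, b, hb, hab⟩ := two_mem (List.nodup_range.filter _) h
  simp only [List.mem_filter, List.mem_range, decide_eq_true_eq] at ha hb
  exact ⟨a, b, hab, by omega, by omega, ha.2, hb.2⟩

lemma occ_self (W : List α) : occ W W = 1 := by
  have h1 : 1 ≤ occ W W := occ_pos_of_infix (infix_refl W)
  have h2 : occ W W ≤ 1 := by
    apply nodup_all_eq_len_le_one (List.nodup_range.filter _)
    intro a ha b hb
    simp only [List.mem_filter, List.mem_range, decide_eq_true_eq] at ha hb
    have la := ha.2.length_le
    have lb := hb.2.length_le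
    simp [List.length_drop] at la lb
    omega
  omega

lemma RightSpecial.infix {u W : List α} (h : RightSpecial u W) : u <:+: W := by
  obtain ⟨x, _, _, hx, _⟩ := h
  exact ((prefix_append u [x]).isInfix).trans hx

lemma RightSpecial.tail {a : α} {u W : List α} (h : RightSpecial (a :: u) W) :
    RightSpecial u W := by
  obtain ⟨x, y, hxy, hx, hy⟩ := h
  refine ⟨x, y, hxy, ?_, ?_⟩
  · exact ((suffix_cons a (u ++ [x])).isInfix).trans (by simpa using hx)
  · exact ((suffix_cons a (u ++ [y])).isInfix).trans (by simpa using hy)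

lemma no_rs_of_length (W : List α) {u : List α} (h : RightSpecial u W) (hl : u.length = W.length) :
    False := by
  obtain ⟨x, _, _, hx, _⟩ := h
  have := hx.length_le
  simp at this
  omega

lemma RW_mem (W : List α) : RW W ∈ {p : ℕ | ∀ u : List α, u.length = p → ¬ RightSpecial u W} := by
  apply Nat.sInf_mem
  exact ⟨W.length, fun u hu h => no_rs_of_length W h hu⟩

lemma RW_le (W : List α) : RW W ≤ W.length :=
  Nat.sInf_le (fun u hu h => no_rs_of_length W h hu)

lemma rs_upward (W : List α) {p : ℕ}
    (hp : ∀ u : List α, u.length = p → ¬ RightSpecial u W)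
    (u : List α) (hu : u.length = p + 1) : ¬ RightSpecial u W := by
  intro h
  match u with
  | [] => simp at hu
  | a :: t => exact hp t (by simpa using hu) h.tail

lemma lt_RW_of_rs {W u : List α} (h : RightSpecial u W) : u.length < RW W := by
  by_contra hle
  push_neg at hle
  -- RW W ≤ u.length, and the property is upward closed from RW W
  have key : ∀ k, ∀ u : List α, u.length = RW W + k → ¬ RightSpecial u W := by
    intro k
    induction k with
    | zero => exact RW_mem W
    | succ n ih => exact fun u hu => rs_upward W ih u (by omega)
  exact key (u.length - RW W) u (by omega) h

lemma KW_le (W : List α) : KW W ≤ W.length :=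
  Nat.sInf_le ⟨W, suffix_refl W, rfl, occ_self W⟩

lemma suffix_occ_two {W : List α} {n : ℕ} (hn : n ≤ W.length) (hlt : n < KW W) :
    2 ≤ occ (W.drop (W.length - n)) W := by
  have hsuf : W.drop (W.length - n) <:+ W := drop_suffix _ W
  have hlen : (W.drop (W.length - n)).length = n := by simp; omega
  have h1 : 1 ≤ occ (W.drop (W.length - n)) W := occ_pos_of_infix hsuf.isInfix
  have hne : occ (W.drop (W.length - n)) W ≠ 1 := by
    intro h1'
    have hK : KW W ≤ n := Nat.sInf_le ⟨_, hsuf, hlen, h1'⟩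
    omega
  omega

def FF (W : List α) (n : ℕ) : Finset (List α) := (factorFinset W).filter (fun u => u.length = n)

lemma C_eq (W : List α) (n : ℕ) : C W n = (FF W n).card := rfl

lemma mem_FF {W u : List α} {n : ℕ} : u ∈ FF W n ↔ u <:+: W ∧ u.length = n := by
  simp [FF, Finset.mem_filter, mem_factorFinset]

noncomputable def RSset (W : List α) (n : ℕ) : Finset (List α) :=
  @Finset.filter _ (fun u => RightSpecial u W) (Classical.decPred _) (FF W n)

noncomputable def DD (W : List α) (n : ℕ) : Finset (List α) :=
  @Finset.filter _ (fun u => ∃ x : α, u ++ [x] <:+: W) (Classical.decPred _) (FF W n)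

lemma mem_RSset {W u : List α} {n : ℕ} :
    u ∈ RSset W n ↔ u <:+: W ∧ u.length = n ∧ RightSpecial u W := by
  simp [RSset, Finset.mem_filter, mem_FF]; tauto

lemma mem_DD {W u : List α} {n : ℕ} :
    u ∈ DD W n ↔ u <:+: W ∧ u.length = n ∧ ∃ x : α, u ++ [x] <:+: W := by
  unfold DD
  refine (@Finset.mem_filter _ _ (Classical.decPred _) (FF W n) u).trans ?_
  rw [mem_FF]
  tauto

lemma RSset_subset_DD (W : List α) (n : ℕ) : RSset W n ⊆ DD W n := by
  intro u hu
  rw [mem_RSset] at hu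
  obtain ⟨h1, h2, x, y, hxy, hx, hy⟩ := hu
  exact mem_DD.mpr ⟨h1, h2, x, hx⟩

lemma DD_subset_FF (W : List α) (n : ℕ) : DD W n ⊆ FF W n := fun u hu =>
  mem_FF.mpr ⟨(mem_DD.mp hu).1, (mem_DD.mp hu).2.1⟩

-- extension from an occurrence not at the very end
lemma ext_of_occurrence {u W : List α} {i : ℕ} (h : u <+: W.drop i)
    (hlt : i + u.length < W.length) : ∃ x : α, u ++ [x] <:+: W := by
  obtain ⟨r, hr⟩ := h
  match r with
  | [] =>
    exfalso
    have := congrArg List.length hr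
    simp at this
    omega
  | x :: r' =>
    refine ⟨x, infix_of_prefix_drop (i := i) ⟨r', ?_⟩⟩
    rw [← hr]
    simp

lemma eq_suffix_of_not_ext {u W : List α} {n : ℕ} (hu : u ∈ FF W n)
    (hno : ¬ ∃ x : α, u ++ [x] <:+: W) : u = W.drop (W.length - n) := by
  rw [mem_FF] at hu
  obtain ⟨⟨s, t, hst⟩, hlen⟩ := hu
  have hpre : u <+: W.drop s.length := by
    rw [← hst, List.append_assoc, drop_left]; exact ⟨t, rfl⟩
  have hle : s.length + n ≤ W.length := by
    have hW : s.length + (u.length + t.length) = W.length := by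
      rw [← hst]; simp
    omega
  rcases Nat.lt_or_ge (s.length + n) W.length with hlt | hge
  · exact absurd (ext_of_occurrence hpre (by omega)) hno
  · have hs : s.length = W.length - n := by omega
    rw [hs] at hpre
    have : (W.drop (W.length - n)).length = n := by simp; omega
    exact hpre.eq_of_length (by omega)

lemma fiber_two {W : List α} {n : ℕ} {u : List α} (hu : u ∈ RSset W n) :
    2 ≤ ((FF W (n + 1)).filter (fun v => v.take n = u)).card := by
  rw [mem_RSset] at hu
  obtain ⟨hinf, hlen, x, y, hxy, hx, hy⟩ := hu
  refine Finset.one_lt_card.mpr ⟨u ++ [x], ?_, u ++ [y], ?_, by simp [hxy]⟩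
  · simp only [Finset.mem_filter, mem_FF]
    exact ⟨⟨hx, by simp [hlen]⟩, by rw [← hlen]; exact List.take_left (l₁ := u) (l₂ := [x])⟩
  · simp only [Finset.mem_filter, mem_FF]
    exact ⟨⟨hy, by simp [hlen]⟩, by rw [← hlen]; exact List.take_left (l₁ := u) (l₂ := [y])⟩

lemma fiber_one {W : List α} {n : ℕ} {u : List α} (hu : u ∈ DD W n) :
    1 ≤ ((FF W (n + 1)).filter (fun v => v.take n = u)).card := by
  rw [mem_DD] at hu
  obtain ⟨hinf, hlen, x, hx⟩ := hu
  refine Finset.card_pos.mpr ⟨u ++ [x], ?_⟩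
  simp only [Finset.mem_filter, mem_FF]
  exact ⟨⟨hx, by simp [hlen]⟩, by rw [← hlen]; exact List.take_left (l₁ := u) (l₂ := [x])⟩

lemma core_count (W : List α) (n : ℕ) :
    (DD W n).card + (RSset W n).card ≤ C W (n + 1) := by
  classical
  have hmap : ∀ v ∈ FF W (n + 1), v.take n ∈ FF W n := by
    intro v hv
    rw [mem_FF] at hv ⊢
    exact ⟨(take_prefix n v).isInfix.trans hv.1, by simp [hv.2]⟩
  rw [C_eq, Finset.card_eq_sum_card_fiberwise hmap]
  calc (DD W n).card + (RSset W n).card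
      = ∑ u ∈ DD W n, (1 + if u ∈ RSset W n then 1 else 0) := by
        have hfil : Finset.filter (fun u => u ∈ RSset W n) (DD W n) = RSset W n := by
          ext u
          simp only [Finset.mem_filter]
          exact ⟨fun h => h.2, fun h => ⟨RSset_subset_DD W n h, h⟩⟩
        rw [Finset.sum_add_distrib, Finset.sum_boole, hfil]
        simp
    _ ≤ ∑ u ∈ DD W n, ((FF W (n+1)).filter (fun v => v.take n = u)).card := by
        apply Finset.sum_le_sum
        intro u hu
        by_cases hrs : u ∈ RSset W n
        · simpa [hrs] using fiber_two hrs
        · simpa [hrs] using fiber_one hu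
    _ ≤ ∑ u ∈ FF W n, ((FF W (n+1)).filter (fun v => v.take n = u)).card :=
        Finset.sum_le_sum_of_subset (DD_subset_FF W n)

lemma stepA {W : List α} {n : ℕ} (hn : n < KW W) :
    C W n + (RSset W n).card ≤ C W (n + 1) := by
  have hsub : FF W n ⊆ DD W n := by
    intro u hu
    obtain ⟨hinf, hlen⟩ := mem_FF.mp hu
    by_contra hnd
    have hnoext : ¬ ∃ x : α, u ++ [x] <:+: W := fun hex => hnd (mem_DD.mpr ⟨hinf, hlen, hex⟩)
    have hle : n ≤ W.length := hlen ▸ hinf.length_le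
    have husuf : u = W.drop (W.length - n) := eq_suffix_of_not_ext hu hnoext
    obtain ⟨i, j, hij, hi, hj, hpi, hpj⟩ := exists_two_of_occ (suffix_occ_two hle hn)
    rw [← husuf] at hpi hpj
    have hli : i + n ≤ W.length := by
      have := hpi.length_le; simp [hlen] at this; omega
    have hlj : j + n ≤ W.length := by
      have := hpj.length_le; simp [hlen] at this; omega
    rcases Nat.lt_or_ge (i + n) W.length with hc | hc
    · exact hnoext (ext_of_occurrence hpi (by omega))
    · exact hnoext (ext_of_occurrence hpj (by omega))
  have heq : FF W n = DD W n := subset_antisymm hsub (DD_subset_FF W n)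
  rw [C_eq, heq]
  exact core_count W n

lemma stepB (W : List α) (n : ℕ) :
    C W n + (RSset W n).card ≤ C W (n + 1) + 1 := by
  classical
  have hbad : (FF W n \ DD W n).card ≤ 1 := by
    apply Finset.card_le_one.mpr
    intro a ha b hb
    rw [Finset.mem_sdiff] at ha hb
    have hA : a = W.drop (W.length - n) :=
      eq_suffix_of_not_ext ha.1 (fun hex => ha.2 (mem_DD.mpr ⟨(mem_FF.mp ha.1).1, (mem_FF.mp ha.1).2, hex⟩))
    have hB : b = W.drop (W.length - n) :=
      eq_suffix_of_not_ext hb.1 (fun hex => hb.2 (mem_DD.mpr ⟨(mem_FF.mp hb.1).1, (mem_FF.mp hb.1).2, hex⟩))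
    rw [hA, hB]
  have hcard : (FF W n).card ≤ (DD W n).card + 1 := by
    have := Finset.card_sdiff_add_card_eq_card (DD_subset_FF W n)
    omega
  have := core_count W n
  rw [C_eq]
  omega

lemma C_zero (W : List α) : C W 0 = 1 := by
  rw [C_eq]
  have : FF W 0 = {[]} := by
    ext u
    rw [mem_FF]
    simp only [Finset.mem_singleton, List.length_eq_zero_iff]
    constructor
    · exact fun h => h.2
    · rintro rfl; exact ⟨nil_infix, rfl⟩
  rw [this, Finset.card_singleton]

lemma C_length (W : List α) : C W W.length = 1 := by
  rw [C_eq]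
  have : FF W W.length = {W} := by
    ext u
    rw [mem_FF]
    simp only [Finset.mem_singleton]
    constructor
    · exact fun h => h.1.sublist.eq_of_length h.2
    · intro he; rw [he]; exact ⟨infix_refl _, rfl⟩
  rw [this, Finset.card_singleton]

lemma teles (W : List α) (m : ℕ) :
    1 + ∑ n ∈ Finset.range m, (RSset W n).card ≤ C W m + (m - min m (KW W)) := by
  induction m with
  | zero => simp [C_zero]
  | succ m ih =>
    rw [Finset.sum_range_succ]
    rcases Nat.lt_or_ge m (KW W) with hm | hm
    · have hA := stepA hm
      omega
    · have hB := stepB W m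
      omega

lemma rs_exists {W : List α} {k : ℕ} (hk : k < RW W) : 1 ≤ (RSset W k).card := by
  have hk' : k ∉ {p : ℕ | ∀ u : List α, u.length = p → ¬ RightSpecial u W} := by
    intro hmem
    have hle : RW W ≤ k := Nat.sInf_le hmem
    omega
  simp only [Set.mem_setOf_eq, not_forall, not_not] at hk'
  obtain ⟨u, hlen, hrs⟩ := hk'
  exact Finset.card_pos.mpr ⟨u, mem_RSset.mpr ⟨hrs.infix, hlen, hrs⟩⟩

theorem stmt16 {α : Type*} [DecidableEq α] (W : List α) (h : Trapezoidal W) :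
    ∀ n : ℕ, n ≤ W.length → ∀ u v : List α,
      RightSpecial u W → RightSpecial v W → u.length = n → v.length = n → u = v := by
  intro n hn u v hu hv hlu hlv
  by_contra hne
  have hur : u ∈ RSset W n := mem_RSset.mpr ⟨hu.infix, hlu, hu⟩
  have hvr : v ∈ RSset W n := mem_RSset.mpr ⟨hv.infix, hlv, hv⟩
  have h2 : 2 ≤ (RSset W n).card := Finset.one_lt_card.mpr ⟨u, hur, v, hvr, hne⟩
  have hnR : n < RW W := hlu ▸ lt_RW_of_rs hu
  have hKle := KW_le W
  have hRle := RW_le W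
  have htel := teles W W.length
  rw [C_length, min_eq_right hKle] at htel
  have hsum_le : ∑ k ∈ Finset.range W.length, (RSset W k).card ≤ RW W := by
    have hT : W.length = RW W + KW W := h
    omega
  have hsub : Finset.range (RW W) ⊆ Finset.range W.length :=
    Finset.range_subset_range.mpr hRle
  have hlow : ∑ k ∈ Finset.range (RW W), (RSset W k).card ≤
      ∑ k ∈ Finset.range W.length, (RSset W k).card :=
    Finset.sum_le_sum_of_subset hsub
  have hnmem : n ∈ Finset.range (RW W) := Finset.mem_range.mpr hnR
  have hsplit : (RSset W n).card + ∑ k ∈ (Finset.range (RW W)).erase n, (RSset W k).card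
      = ∑ k ∈ Finset.range (RW W), (RSset W k).card :=
    Finset.add_sum_erase (Finset.range (RW W)) (fun k => (RSset W k).card) hnmem
  have herase : ((Finset.range (RW W)).erase n).card ≤
      ∑ k ∈ (Finset.range (RW W)).erase n, (RSset W k).card := by
    have := Finset.card_nsmul_le_sum ((Finset.range (RW W)).erase n)
      (fun k => (RSset W k).card) 1
      (fun x hx => rs_exists (Finset.mem_range.mp (Finset.mem_of_mem_erase hx)))
    simpa using this
  have hec : ((Finset.range (RW W)).erase n).card = RW W - 1 := by
    rw [Finset.card_erase_of_mem hnmem, Finset.card_range]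
  omega
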